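/- Let U and A be bialgebras over ℂ with a duality pairing ⟨·,·⟩, and define the left action of U on A by a.φ = Σ φ₍₁₎ ⟨a, φ₍₂₎⟩. Let V ⊆ U be a unital subalgebra satisfying the coideal property Δ(V) ⊆ V⊗U + U⊗V, and let 𝒥 be the left ideal of U spanned by the elements u·(a − ε(a)·1) with u ∈ U and a ∈ V. Then the set of 𝒥-invariants A^𝒥 = { φ ∈ A : x.φ = 0 for all x ∈ 𝒥 } is a unital subalgebra of A. (This is the claim that the coideal property of V guarantees that the invariant space A_q(G/K) is a subalgebra of A_q(G).) -/
import Mathlib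

open TensorProduct

noncomputable section

variable {U A : Type*} [Ring U] [Ring A] [Bialgebra ℂ U] [Bialgebra ℂ A]

/-- The extension of a bilinear pairing `⟨·,·⟩ : U × A → ℂ` to tensor squares:
`⟨a ⊗ b, φ ⊗ ψ⟩ = ⟨a, φ⟩ ⟨b, ψ⟩`. -/
def pairTensor (p : U →ₗ[ℂ] Module.Dual ℂ A) :
    U ⊗[ℂ] U →ₗ[ℂ] Module.Dual ℂ (A ⊗[ℂ] A) :=
  (TensorProduct.dualDistrib ℂ A A).comp (TensorProduct.map p p)

/-- The left action of `U` on `A` induced by a pairing `p`, as a linear map on the tensor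
product: `a ⊗ φ ↦ a.φ = Σ φ₍₁₎ ⟨a, φ₍₂₎⟩`. -/
def actM (p : U →ₗ[ℂ] Module.Dual ℂ A) : U ⊗[ℂ] A →ₗ[ℂ] A :=
  (TensorProduct.rid ℂ A).toLinearMap
    ∘ₗ LinearMap.lTensor A (TensorProduct.lift p)
    ∘ₗ (TensorProduct.leftComm ℂ U A A).toLinearMap
    ∘ₗ LinearMap.lTensor U (Coalgebra.comul (R := ℂ) (A := A))

/-- For subspaces `X, Y ⊆ U`, the linear span in `U ⊗ U` of the elements `x ⊗ y` with
`x ∈ X`, `y ∈ Y`. -/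
def spanTensor {U : Type*} [Ring U] [Bialgebra ℂ U] (X Y : Submodule ℂ U) :
    Submodule ℂ (U ⊗[ℂ] U) :=
  Submodule.span ℂ {z | ∃ x ∈ X, ∃ y ∈ Y, z = x ⊗ₜ y}

section Aux

variable (p : U →ₗ[ℂ] Module.Dual ℂ A)

/-- Auxiliary: `gmap p a (φ ⊗ ψ) = ⟨a, ψ⟩ • φ`. -/
def gmap (a : U) : A ⊗[ℂ] A →ₗ[ℂ] A :=
  TensorProduct.lift ((LinearMap.lsmul ℂ A ∘ₗ p a).flip)

lemma gmap_tmul (a : U) (φ ψ : A) : gmap p a (φ ⊗ₜ ψ) = p a ψ • φ := rfl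

lemma pairTensor_tmul (a b : U) (x y : A) :
    pairTensor p (a ⊗ₜ b) (x ⊗ₜ y) = p a x * p b y := by
  simp [pairTensor, TensorProduct.dualDistrib_apply]

lemma gmap_addU (a b : U) (t : A ⊗[ℂ] A) :
    gmap p (a + b) t = gmap p a t + gmap p b t := by
  induction t using TensorProduct.induction_on with
  | zero => simp
  | tmul x y => simp [gmap_tmul, add_smul]
  | add s t hs ht => simp only [map_add, hs, ht]; abel

lemma gmap_smulU (c : ℂ) (a : U) (t : A ⊗[ℂ] A) :
    gmap p (c • a) t = c • gmap p a t := by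
  induction t using TensorProduct.induction_on with
  | zero => simp
  | tmul x y => simp [gmap_tmul, smul_smul]
  | add s t hs ht => simp only [map_add, hs, ht, smul_add]

lemma gmap_zeroU (t : A ⊗[ℂ] A) : gmap p 0 t = 0 := by
  have := gmap_smulU p 0 0 t; simpa using this

lemma gmap_subU (a b : U) (t : A ⊗[ℂ] A) :
    gmap p (a - b) t = gmap p a t - gmap p b t := by
  have h := gmap_addU p (a - b) b t
  rw [sub_add_cancel] at h
  exact eq_sub_of_add_eq h.symm

end Aux

section Aux2

variable (p : U →ₗ[ℂ] Module.Dual ℂ A)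

/-- The action as a plain function. -/
def Act (a : U) (φ : A) : A := gmap p a (Coalgebra.comul (R := ℂ) φ)

set_option synthInstance.maxHeartbeats 400000 in
lemma actM_tmul (a : U) (φ : A) : actM p (a ⊗ₜ φ) = Act p a φ := by
  have key : ∀ t : A ⊗[ℂ] A,
      (TensorProduct.rid ℂ A) (LinearMap.lTensor A (TensorProduct.lift p)
        ((TensorProduct.leftComm ℂ U A A) (a ⊗ₜ t))) = gmap p a t := by
    intro t
    induction t using TensorProduct.induction_on with
    | zero => simp only [tmul_zero, LinearEquiv.map_zero, map_zero]
    | tmul x y =>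
        rw [TensorProduct.leftComm_tmul, LinearMap.lTensor_tmul, TensorProduct.lift.tmul,
          TensorProduct.rid_tmul, gmap_tmul]
    | add s t hs ht => simp only [tmul_add, map_add, hs, ht]
  simpa [actM, Act] using key (Coalgebra.comul (R := ℂ) φ)

lemma act_addU (a b : U) (φ : A) : Act p (a + b) φ = Act p a φ + Act p b φ :=
  gmap_addU p a b _

lemma act_smulU (c : ℂ) (a : U) (φ : A) : Act p (c • a) φ = c • Act p a φ :=
  gmap_smulU p c a _

lemma act_subU (a b : U) (φ : A) : Act p (a - b) φ = Act p a φ - Act p b φ :=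
  gmap_subU p a b _

lemma act_zeroU (φ : A) : Act p 0 φ = 0 := gmap_zeroU p _

lemma act_zeroA (a : U) : Act p a 0 = 0 := by simp [Act]

lemma act_one_left (honeU : ∀ φ : A, p 1 φ = Coalgebra.counit (R := ℂ) φ) (φ : A) :
    Act p 1 φ = φ := by
  have key : ∀ t : A ⊗[ℂ] A,
      gmap p 1 t = (TensorProduct.rid ℂ A)
        (LinearMap.lTensor A (Coalgebra.counit (R := ℂ)) t) := by
    intro t
    induction t using TensorProduct.induction_on with
    | zero => simp
    | tmul x y => simp [gmap_tmul, honeU]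
    | add s t hs ht => simp only [map_add, hs, ht]
  have h2 : LinearMap.lTensor A (Coalgebra.counit (R := ℂ))
      (Coalgebra.comul (R := ℂ) φ) = φ ⊗ₜ (1 : ℂ) :=
    Coalgebra.lTensor_counit_comul φ
  rw [Act, key, h2]
  simp

lemma act_one_right (honeA : ∀ a : U, p a 1 = Coalgebra.counit (R := ℂ) a) (a : U) :
    Act p a 1 = Coalgebra.counit (R := ℂ) a • 1 := by
  rw [Act, Bialgebra.comul_one, Algebra.TensorProduct.one_def, gmap_tmul, honeA]

lemma act_mul_left
    (hmulU : ∀ (a b : U) (φ : A),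
      p (a * b) φ = pairTensor p (a ⊗ₜ b) (Coalgebra.comul (R := ℂ) φ))
    (a b : U) (φ : A) : Act p (a * b) φ = Act p a (Act p b φ) := by
  set Δ := Coalgebra.comul (R := ℂ) (A := A) with hΔ
  set q : A ⊗[ℂ] A →ₗ[ℂ] ℂ := pairTensor p (a ⊗ₜ b) with hq
  set N : A ⊗[ℂ] (A ⊗[ℂ] A) →ₗ[ℂ] A :=
    TensorProduct.lift ((LinearMap.lsmul ℂ A ∘ₗ q).flip) with hNdef
  set M : (A ⊗[ℂ] A) ⊗[ℂ] A →ₗ[ℂ] A :=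
    TensorProduct.lift ((LinearMap.lsmul ℂ A ∘ₗ p b).flip ∘ₗ gmap p a) with hMdef
  have hN : ∀ (x : A) (t : A ⊗[ℂ] A), N (x ⊗ₜ t) = q t • x := fun x t => rfl
  have hM : ∀ (s : A ⊗[ℂ] A) (z : A), M (s ⊗ₜ z) = p b z • gmap p a s := fun s z => rfl
  have h1 : ∀ t : A ⊗[ℂ] A, gmap p (a * b) t = N (LinearMap.lTensor A Δ t) := by
    intro t
    induction t using TensorProduct.induction_on with
    | zero => simp
    | tmul x ψ => rw [LinearMap.lTensor_tmul, hN, gmap_tmul, hmulU a b ψ]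
    | add s t hs ht => simp only [map_add, hs, ht]
  have h2 : N ∘ₗ (TensorProduct.assoc ℂ A A A).toLinearMap = M := by
    apply TensorProduct.ext_threefold
    intro x y z
    simp only [LinearMap.comp_apply, LinearEquiv.coe_coe, TensorProduct.assoc_tmul]
    rw [hN, hM, gmap_tmul, hq, pairTensor_tmul, mul_comm, mul_smul]
  have h3 : ∀ t : A ⊗[ℂ] A, gmap p a (Δ (gmap p b t)) = M (LinearMap.rTensor A Δ t) := by
    intro t
    induction t using TensorProduct.induction_on with
    | zero => simp
    | tmul x z =>
        rw [LinearMap.rTensor_tmul, hM, gmap_tmul, map_smul, map_smul]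
    | add s t hs ht => simp only [map_add, hs, ht]
  calc Act p (a * b) φ = N (LinearMap.lTensor A Δ (Δ φ)) := h1 _
    _ = N ((TensorProduct.assoc ℂ A A A) ((LinearMap.rTensor A Δ) (Δ φ))) := by
        rw [Coalgebra.coassoc_apply]
    _ = M (LinearMap.rTensor A Δ (Δ φ)) := by
        rw [← h2]; rfl
    _ = Act p a (Act p b φ) := (h3 _).symm

/-- `FmapL p w ((x ⊗ y) ⊗ (z ⊗ w')) = pairTensor p w (y ⊗ w') • (x * z)`, linear in `w`. -/
def FmapL : (U ⊗[ℂ] U) →ₗ[ℂ] ((A ⊗[ℂ] A) ⊗[ℂ] (A ⊗[ℂ] A)) →ₗ[ℂ] A where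
  toFun w := (TensorProduct.rid ℂ A).toLinearMap
      ∘ₗ TensorProduct.map (LinearMap.mul' ℂ A) (pairTensor p w)
      ∘ₗ (TensorProduct.tensorTensorTensorComm ℂ A A A A).toLinearMap
  map_add' w w' := by
    simp only [map_add, TensorProduct.map_add_right]
    ext e
    simp [LinearMap.add_comp, LinearMap.comp_add]
  map_smul' c w := by
    simp only [map_smul, TensorProduct.map_smul_right, RingHom.id_apply]
    ext e
    simp

lemma FmapL_tmul (w : U ⊗[ℂ] U) (x y z w' : A) :
    FmapL p w ((x ⊗ₜ y) ⊗ₜ (z ⊗ₜ w')) = pairTensor p w (y ⊗ₜ w') • (x * z) := by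
  simp [FmapL, TensorProduct.tensorTensorTensorComm_tmul, LinearMap.mul'_apply]

lemma act_mul_right
    (hmulA : ∀ (a : U) (φ ψ : A),
      p a (φ * ψ) = pairTensor p (Coalgebra.comul (R := ℂ) a) (φ ⊗ₜ ψ))
    (a : U) (φ ψ : A) :
    Act p a (φ * ψ) = FmapL p (Coalgebra.comul (R := ℂ) a)
      ((Coalgebra.comul (R := ℂ) φ) ⊗ₜ (Coalgebra.comul (R := ℂ) ψ)) := by
  have key : ∀ s t : A ⊗[ℂ] A,
      gmap p a (s * t) = FmapL p (Coalgebra.comul (R := ℂ) a) (s ⊗ₜ t) := by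
    intro s t
    induction s using TensorProduct.induction_on with
    | zero => simp
    | add s1 s2 h1 h2 => rw [add_mul, map_add, h1, h2, add_tmul, map_add]
    | tmul x y =>
        induction t using TensorProduct.induction_on with
        | zero => simp
        | add t1 t2 h1 h2 => rw [mul_add, map_add, h1, h2, tmul_add, map_add]
        | tmul z w' =>
            rw [Algebra.TensorProduct.tmul_mul_tmul, gmap_tmul, FmapL_tmul, hmulA]
  rw [Act, Bialgebra.comul_mul, key]

lemma FmapL_pure (x y : U) (s t : A ⊗[ℂ] A) :
    FmapL p (x ⊗ₜ y) (s ⊗ₜ t) = gmap p x s * gmap p y t := by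
  induction s using TensorProduct.induction_on with
  | zero => simp
  | add s1 s2 h1 h2 => rw [add_tmul, map_add, h1, h2, map_add, add_mul]
  | tmul s1 s2 =>
      induction t using TensorProduct.induction_on with
      | zero => simp
      | add t1 t2 h1 h2 => rw [tmul_add, map_add, h1, h2, map_add, mul_add]
      | tmul t1 t2 =>
          rw [FmapL_tmul, pairTensor_tmul, gmap_tmul, gmap_tmul,
            smul_mul_smul_comm]

end Aux2

theorem invariants_subalgebra (p : U →ₗ[ℂ] Module.Dual ℂ A)
    (hmulU : ∀ (a b : U) (φ : A),
      p (a * b) φ = pairTensor p (a ⊗ₜ b) (Coalgebra.comul (R := ℂ) φ))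
    (honeU : ∀ φ : A, p 1 φ = Coalgebra.counit (R := ℂ) φ)
    (hmulA : ∀ (a : U) (φ ψ : A),
      p a (φ * ψ) = pairTensor p (Coalgebra.comul (R := ℂ) a) (φ ⊗ₜ ψ))
    (honeA : ∀ a : U, p a 1 = Coalgebra.counit (R := ℂ) a)
    (V : Subalgebra ℂ U)
    (hV : ∀ v ∈ V, Coalgebra.comul (R := ℂ) v ∈
      spanTensor (Subalgebra.toSubmodule V) ⊤ + spanTensor ⊤ (Subalgebra.toSubmodule V)) :
    ∃ S : Subalgebra ℂ A,
      (S : Set A) =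
        {φ : A | ∀ x ∈ Submodule.span ℂ
          {x : U | ∃ u : U, ∃ a ∈ V, x = u * (a - Coalgebra.counit (R := ℂ) a • 1)},
            actM p (x ⊗ₜ φ) = 0} := by
  set ε : U →ₗ[ℂ] ℂ := Coalgebra.counit (R := ℂ) (A := U) with hε
  set X : Set U := {x : U | ∃ u : U, ∃ a ∈ V, x = u * (Coalgebra.counit (R := ℂ) a • 1)}
    with hX -- dummy, not used
  -- membership characterization
  have hfwd : ∀ φ : A, (∀ x ∈ Submodule.span ℂ
        {x : U | ∃ u : U, ∃ a ∈ V, x = u * (a - Coalgebra.counit (R := ℂ) a • 1)},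
        actM p (x ⊗ₜ φ) = 0) → ∀ a ∈ V, Act p a φ = ε a • φ := by
    intro φ h a ha
    have hx : (1 : U) * (a - ε a • 1) ∈ Submodule.span ℂ
        {x : U | ∃ u : U, ∃ a ∈ V, x = u * (a - Coalgebra.counit (R := ℂ) a • 1)} :=
      Submodule.subset_span ⟨1, a, ha, rfl⟩
    have h0 := h _ hx
    rw [actM_tmul, one_mul, act_subU, act_smulU, act_one_left p honeU] at h0
    exact sub_eq_zero.mp h0
  have hbwd : ∀ φ : A, (∀ a ∈ V, Act p a φ = ε a • φ) → ∀ x ∈ Submodule.span ℂ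
        {x : U | ∃ u : U, ∃ a ∈ V, x = u * (a - Coalgebra.counit (R := ℂ) a • 1)},
        actM p (x ⊗ₜ φ) = 0 := by
    intro φ h x hx
    rw [actM_tmul]
    induction hx using Submodule.span_induction with
    | mem x hx =>
        obtain ⟨u, a, ha, rfl⟩ := hx
        rw [act_mul_left p hmulU, act_subU, act_smulU, act_one_left p honeU, h a ha,
          sub_self, act_zeroA]
    | zero => exact act_zeroU p φ
    | add x y _ _ hx hy => rw [act_addU, hx, hy, add_zero]
    | smul c x _ hx => rw [act_smulU, hx, smul_zero]
  -- closure under multiplication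
  have hmul : ∀ φ ψ : A, (∀ a ∈ V, Act p a φ = ε a • φ) → (∀ a ∈ V, Act p a ψ = ε a • ψ) →
      ∀ a ∈ V, Act p a (φ * ψ) = ε a • (φ * ψ) := by
    intro φ ψ hφ hψ a ha
    set Δφ := Coalgebra.comul (R := ℂ) φ
    set Δψ := Coalgebra.comul (R := ℂ) ψ
    set cε1 : U ⊗[ℂ] U →ₗ[ℂ] U :=
      (TensorProduct.lid ℂ U).toLinearMap ∘ₗ LinearMap.rTensor U ε with hc1
    set cε2 : U ⊗[ℂ] U →ₗ[ℂ] U :=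
      (TensorProduct.rid ℂ U).toLinearMap ∘ₗ LinearMap.lTensor U ε with hc2
    have hc1t : ∀ (x y : U), cε1 (x ⊗ₜ y) = ε x • y := by
      intro x y
      simp [hc1, TensorProduct.lid_tmul]
    have hc2t : ∀ (x y : U), cε2 (x ⊗ₜ y) = ε y • x := by
      intro x y
      simp [hc2, TensorProduct.rid_tmul]
    have f1 : cε1 (Coalgebra.comul (R := ℂ) a) = a := by
      have := Coalgebra.rTensor_counit_comul (R := ℂ) a
      simp only [hc1, LinearMap.comp_apply, LinearEquiv.coe_coe, hε]
      rw [this]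
      simp [TensorProduct.lid_tmul]
    have f2 : cε2 (Coalgebra.comul (R := ℂ) a) = a := by
      have := Coalgebra.lTensor_counit_comul (R := ℂ) a
      simp only [hc2, LinearMap.comp_apply, LinearEquiv.coe_coe, hε]
      rw [this]
      simp [TensorProduct.rid_tmul]
    have f3 : ∀ w : U ⊗[ℂ] U, ε (cε1 w) = ε (cε2 w) := by
      intro w
      induction w using TensorProduct.induction_on with
      | zero => simp
      | tmul x y => rw [hc1t, hc2t, map_smul, map_smul, smul_eq_mul, smul_eq_mul, mul_comm]
      | add s t hs ht => rw [map_add, map_add, map_add, map_add, hs, ht]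
    have f4 : ∀ t ∈ spanTensor ⊤ (Subalgebra.toSubmodule V), cε1 t ∈ V := by
      intro t ht
      induction ht using Submodule.span_induction with
      | mem z hz =>
          obtain ⟨x, -, y, hy, rfl⟩ := hz
          rw [hc1t]
          exact V.toSubmodule.smul_mem _ hy
      | zero => rw [map_zero]; exact V.zero_mem
      | add s t _ _ hs ht => rw [map_add]; exact V.toSubmodule.add_mem hs ht
      | smul c s _ hs => rw [map_smul]; exact V.toSubmodule.smul_mem _ hs
    have f5 : ∀ s ∈ spanTensor (Subalgebra.toSubmodule V) ⊤, cε2 s ∈ V := by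
      intro t ht
      induction ht using Submodule.span_induction with
      | mem z hz =>
          obtain ⟨x, hx, y, -, rfl⟩ := hz
          rw [hc2t]
          exact V.toSubmodule.smul_mem _ hx
      | zero => rw [map_zero]; exact V.zero_mem
      | add s t _ _ hs ht => rw [map_add]; exact V.toSubmodule.add_mem hs ht
      | smul c s _ hs => rw [map_smul]; exact V.toSubmodule.smul_mem _ hs
    have f6 : ∀ s ∈ spanTensor (Subalgebra.toSubmodule V) ⊤,
        FmapL p s (Δφ ⊗ₜ Δψ) = φ * Act p (cε1 s) ψ := by
      intro s hs
      induction hs using Submodule.span_induction with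
      | mem z hz =>
          obtain ⟨x, hx, y, -, rfl⟩ := hz
          rw [FmapL_pure, hc1t, act_smulU]
          have : gmap p x Δφ = Act p x φ := rfl
          rw [this, hφ x hx]
          have : gmap p y Δψ = Act p y ψ := rfl
          rw [this, smul_mul_assoc, mul_smul_comm]
      | zero => rw [map_zero, map_zero, act_zeroU, mul_zero]; rfl
      | add s t _ _ hs ht =>
          rw [map_add, map_add, LinearMap.add_apply, hs, ht, act_addU, mul_add]
      | smul c s _ hs =>
          rw [map_smul, map_smul, LinearMap.smul_apply, hs, act_smulU, mul_smul_comm]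
    have f7 : ∀ t ∈ spanTensor ⊤ (Subalgebra.toSubmodule V),
        FmapL p t (Δφ ⊗ₜ Δψ) = Act p (cε2 t) φ * ψ := by
      intro s hs
      induction hs using Submodule.span_induction with
      | mem z hz =>
          obtain ⟨x, -, y, hy, rfl⟩ := hz
          rw [FmapL_pure, hc2t, act_smulU]
          have h1 : gmap p y Δψ = Act p y ψ := rfl
          rw [h1, hψ y hy]
          have h2 : gmap p x Δφ = Act p x φ := rfl
          rw [h2, smul_mul_assoc, mul_smul_comm]
      | zero => rw [map_zero, map_zero, act_zeroU, zero_mul]; rfl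
      | add s t _ _ hs ht =>
          rw [map_add, map_add, LinearMap.add_apply, hs, ht, act_addU, add_mul]
      | smul c s _ hs =>
          rw [map_smul, map_smul, LinearMap.smul_apply, hs, act_smulU, smul_mul_assoc]
    have hmem : Coalgebra.comul (R := ℂ) a ∈
        spanTensor (Subalgebra.toSubmodule V) ⊤ ⊔ spanTensor ⊤ (Subalgebra.toSubmodule V) := by
      rw [← Submodule.add_eq_sup]
      exact hV a ha
    obtain ⟨s, hs, t, ht, hst⟩ := Submodule.mem_sup.mp hmem
    have hst' : s + t = Coalgebra.comul (R := ℂ) a := by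
      first
      | exact hst
      | exact hst.symm
    have hsplit : Act p a (φ * ψ) = FmapL p s (Δφ ⊗ₜ Δψ) + FmapL p t (Δφ ⊗ₜ Δψ) := by
      rw [act_mul_right p hmulA, ← hst', map_add, LinearMap.add_apply]
    have hc : cε1 t ∈ V := f4 t ht
    have hd : cε2 s ∈ V := f5 s hs
    have hb : cε1 s = a - cε1 t := by
      have h0 : cε1 s + cε1 t = a := by rw [← map_add, hst', f1]
      exact eq_sub_of_add_eq h0
    have he : cε2 t = a - cε2 s := by
      have h0 : cε2 s + cε2 t = a := by rw [← map_add, hst', f2]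
      exact eq_sub_of_add_eq (by rw [add_comm] at h0; exact h0)
    have hsum : ε (cε1 t) + ε (cε2 s) = ε a := by
      rw [← f3 s, add_comm, ← map_add, ← map_add, hst', f1]
    rw [hsplit, f6 s hs, f7 t ht, hb, he, act_subU, act_subU,
      hψ a ha, hψ _ hc, hφ a ha, hφ _ hd]
    rw [mul_sub, sub_mul, mul_smul_comm, mul_smul_comm, smul_mul_assoc, smul_mul_assoc]
    rw [← hsum, add_smul]
    abel
  -- build the subalgebra
  refine ⟨{
    carrier := {φ : A | ∀ x ∈ Submodule.span ℂ
      {x : U | ∃ u : U, ∃ a ∈ V, x = u * (a - Coalgebra.counit (R := ℂ) a • 1)},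
        actM p (x ⊗ₜ φ) = 0}
    mul_mem' := ?_
    one_mem' := ?_
    add_mem' := ?_
    zero_mem' := ?_
    algebraMap_mem' := ?_ }, rfl⟩
  · intro φ ψ hφ hψ
    exact hbwd _ (hmul φ ψ (hfwd φ hφ) (hfwd ψ hψ))
  · refine hbwd 1 ?_
    intro a ha
    exact act_one_right p honeA a
  · intro φ ψ hφ hψ x hx
    have := hφ x hx
    have h2 := hψ x hx
    rw [tmul_add, map_add, this, h2, add_zero]
  · intro x hx
    rw [tmul_zero, map_zero]
  · intro r x hx
    have h1 : (algebraMap ℂ A) r = r • (1 : A) := Algebra.algebraMap_eq_smul_one r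
    rw [h1, tmul_smul, map_smul]
    have h2 := hbwd 1 (fun a ha => act_one_right p honeA a) x hx
    rw [h2, smul_zero]
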